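/- Let X_o = Σ_{j=1}^J c_j h_j a(τ_j)^H ∈ ℂ^{K×N} with ‖h_j‖₂ = 1, c_j ∈ ℂ nonzero, and distinct τ_j ∈ [0,1). Suppose there exists a vector-valued trigonometric polynomial q(τ) = Σ_{n=−2M}^{2M} λ(n) e^{i2πnτ} b_n ∈ ℂ^K with q(τ_j) = sign(c_j) h_j for all j and ‖q(τ)‖₂ < 1 for τ ∉ {τ_1,…,τ_J}. Then ⟨λ, y⟩_ℝ = Σ_j |c_j| ≥ ‖X_o‖_A, where y(n) = ⟨X_o, b_n e_n^H⟩, and consequently ‖X_o‖_A = Σ_j |c_j| and X_o is an optimal solution of the atomic norm minimization problem min ‖X‖_A subject to ⟨X, b_n e_n^H⟩ = y(n) for all n. -/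

import Mathlib

open Real Complex Matrix

noncomputable section

/-- The steering vector `a(τ) ∈ ℂ^N`, `N = 4M+1`, with entries `e^{i2πnτ}`, `n = −2M,…,2M`. -/
def aVec (M : ℕ) (τ : ℝ) : Fin (4 * M + 1) → ℂ :=
  fun n => Complex.exp (Complex.I * (2 * π * ((n : ℤ) - 2 * M) * τ))

/-- The atom `h a(τ)ᴴ`. -/
def atomMat {K M : ℕ} (h : EuclideanSpace ℂ (Fin K)) (τ : ℝ) :
    Matrix (Fin K) (Fin (4 * M + 1)) ℂ :=
  Matrix.of fun i j => h i * star (aVec M τ j)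

/-- The atomic norm `‖X‖_A = inf { Σ_k |c_k| : X = Σ_k c_k h_k a(τ_k)ᴴ, ‖h_k‖₂ = 1 }`. -/
def atomicNorm {K M : ℕ} (X : Matrix (Fin K) (Fin (4 * M + 1)) ℂ) : ℝ :=
  sInf {t : ℝ | ∃ (J : ℕ) (c : Fin J → ℂ) (h : Fin J → EuclideanSpace ℂ (Fin K))
    (τ : Fin J → ℝ), (∀ k, ‖h k‖ = 1) ∧ (∀ k, τ k ∈ Set.Ico (0 : ℝ) 1) ∧
    X = ∑ k, c k • atomMat (h k) (τ k) ∧ t = ∑ k, ‖c k‖}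

lemma sum_rotate' {α β γ : Type*} [Fintype α] [Fintype β] [Fintype γ]
    (f : α → β → γ → ℂ) :
    ∑ a, ∑ b, ∑ g, f a b g = ∑ g, ∑ a, ∑ b, f a b g := by
  calc ∑ a, ∑ b, ∑ g, f a b g = ∑ a, ∑ g, ∑ b, f a b g :=
        Finset.sum_congr rfl fun a _ => Finset.sum_comm
    _ = ∑ g, ∑ a, ∑ b, f a b g := Finset.sum_comm

lemma key_identity {K M J' : ℕ} (lam : Fin (4 * M + 1) → ℂ)
    (b : Fin (4 * M + 1) → EuclideanSpace ℂ (Fin K))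
    (q : ℝ → EuclideanSpace ℂ (Fin K))
    (hqdef : ∀ t : ℝ, q t = ∑ n : Fin (4 * M + 1),
      (lam n * Complex.exp (Complex.I * (2 * π * ((n : ℤ) - 2 * M) * t))) • b n)
    (c' : Fin J' → ℂ) (h' : Fin J' → EuclideanSpace ℂ (Fin K)) (τ' : Fin J' → ℝ)
    (X : Matrix (Fin K) (Fin (4 * M + 1)) ℂ)
    (hX : X = ∑ k, c' k • atomMat (h' k) (τ' k)) :
    (∑ n, (starRingEnd ℂ) (lam n) * (∑ i, star (b n i) * X i n)) =
      ∑ k, c' k * ∑ i, (starRingEnd ℂ) (q (τ' k) i) * h' k i := by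
  subst hX
  have hq : ∀ t i, q t i = ∑ n : Fin (4 * M + 1), lam n * aVec M t n * b n i := by
    intro t i
    have h1 : q t i = ∑ n : Fin (4*M+1),
        ((lam n * Complex.exp (Complex.I * (2 * π * ((n : ℤ) - 2 * M) * t))) • b n) i := by
      rw [hqdef t]
      rw [WithLp.ofLp_sum]
      exact Finset.sum_apply i Finset.univ _
    rw [h1]
    simp [aVec, PiLp.smul_apply, mul_assoc]
  simp only [hq, Matrix.sum_apply, Matrix.smul_apply, atomMat, Matrix.of_apply,
    smul_eq_mul, map_sum, Finset.mul_sum, Finset.sum_mul]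
  rw [sum_rotate']
  apply Finset.sum_congr rfl
  intro k _
  rw [Finset.sum_comm]
  apply Finset.sum_congr rfl
  intro i _
  apply Finset.sum_congr rfl
  intro n _
  simp only [_root_.map_mul, starRingEnd_apply]
  ring

lemma exists_decomposition {K M : ℕ} (X : Matrix (Fin K) (Fin (4 * M + 1)) ℂ) :
    ∃ (J : ℕ) (c : Fin J → ℂ) (h : Fin J → EuclideanSpace ℂ (Fin K)) (τ : Fin J → ℝ),
      (∀ k, ‖h k‖ = 1) ∧ (∀ k, τ k ∈ Set.Ico (0:ℝ) 1) ∧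
      X = ∑ k, c k • atomMat (h k) (τ k) := by
  set θ : Fin (4*M+1) → ℝ := fun k => (k : ℝ) / (4*M+1) with hθ
  set w : Fin (4*M+1) → ℂ := fun k => Complex.exp (Complex.I * (2 * π * θ k)) with hw
  have hNpos : (0:ℝ) < 4*M+1 := by positivity
  have hθmem : ∀ k, θ k ∈ Set.Ico (0:ℝ) 1 := by
    intro k
    refine ⟨by positivity, ?_⟩
    rw [hθ]
    refine (div_lt_one hNpos).mpr ?_
    have := k.isLt
    exact_mod_cast this
  have hθinj : Function.Injective θ := by
    intro k j hkj
    have h1 : (k:ℝ) = (j:ℝ) := by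
      simp only [hθ] at hkj
      rw [div_left_inj' hNpos.ne'] at hkj
      exact_mod_cast hkj
    exact Fin.ext (by exact_mod_cast h1)
  have hwinj : Function.Injective w := by
    intro k j hkj
    apply hθinj
    rw [hw] at hkj
    simp only [Complex.exp_eq_exp_iff_exists_int] at hkj
    obtain ⟨m, hm⟩ := hkj
    have h4 : ((θ k : ℂ) - θ j - m) * (Complex.I * (2*(π:ℂ))) = 0 := by
      linear_combination hm
    have h5 : (θ k : ℂ) - θ j - m = 0 := by
      rcases mul_eq_zero.mp h4 with h | h
      · exact h
      · exfalso
        rcases mul_eq_zero.mp h with h' | h'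
        · exact Complex.I_ne_zero h'
        · have : (π:ℂ) ≠ 0 := by exact_mod_cast Real.pi_ne_zero
          simp [this] at h'
    have h6 : θ k - θ j - (m:ℝ) = 0 := by exact_mod_cast h5
    have hk1 := (hθmem k).1
    have hk2 := (hθmem k).2
    have hj1 := (hθmem j).1
    have hj2 := (hθmem j).2
    have hm1 : (m:ℝ) < 1 := by linarith
    have hm2 : (-1:ℝ) < (m:ℝ) := by linarith
    have hm0 : m = 0 := by
      have u1 : m < 1 := by exact_mod_cast hm1
      have u2 : -1 < m := by exact_mod_cast hm2
      omega
    rw [hm0] at h6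
    push_cast at h6
    linarith
  set A : Matrix (Fin (4*M+1)) (Fin (4*M+1)) ℂ :=
    Matrix.of (fun k n => aVec M (θ k) n) with hA
  have hwne : ∀ k, w k ≠ 0 := fun k => Complex.exp_ne_zero _
  have hAeq : A = Matrix.diagonal (fun k => (w k ^ (2*M))⁻¹) * Matrix.vandermonde w := by
    ext k n
    rw [Matrix.diagonal_mul]
    simp only [hA, Matrix.of_apply, Matrix.vandermonde_apply, aVec]
    have e1 : Complex.I * (2 * π * ((n : ℤ) - 2 * M) * (θ k)) =
        (((n:ℤ) - 2*M : ℤ) : ℂ) * (Complex.I * (2 * π * θ k)) := by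
      push_cast
      ring
    rw [e1, Complex.exp_int_mul]
    have hww : Complex.exp (Complex.I * (2 * π * θ k)) = w k := rfl
    rw [hww, zpow_sub₀ (hwne k), div_eq_mul_inv, mul_comm]
    norm_cast
  have hdet : A.det ≠ 0 := by
    rw [hAeq, Matrix.det_mul, Matrix.det_diagonal]
    apply mul_ne_zero
    · exact Finset.prod_ne_zero_iff.mpr fun k _ => inv_ne_zero (pow_ne_zero _ (hwne k))
    · exact Matrix.det_vandermonde_ne_zero_iff.mpr hwinj
  have hdetu : IsUnit A.det := isUnit_iff_ne_zero.mpr hdet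
  set U : Fin K → Fin (4*M+1) → ℂ :=
    fun i => Matrix.vecMul (fun n => (starRingEnd ℂ) (X i n)) A⁻¹ with hU
  have hUsol : ∀ i n, ∑ k, U i k * A k n = (starRingEnd ℂ) (X i n) := by
    intro i n
    have h1 : Matrix.vecMul (U i) A = fun n => (starRingEnd ℂ) (X i n) := by
      rw [hU]
      rw [Matrix.vecMul_vecMul, Matrix.nonsing_inv_mul A hdetu, Matrix.vecMul_one]
    have h2 := congrFun h1 n
    simpa [Matrix.vecMul, dotProduct] using h2
  refine ⟨K * (4*M+1),
    fun p => (starRingEnd ℂ) (U (finProdFinEquiv.symm p).1 (finProdFinEquiv.symm p).2),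
    fun p => EuclideanSpace.single (finProdFinEquiv.symm p).1 1,
    fun p => θ (finProdFinEquiv.symm p).2, ?_, ?_, ?_⟩
  · intro p
    rw [EuclideanSpace.norm_single]
    exact norm_one
  · intro p
    exact hθmem _
  · ext i n
    rw [Matrix.sum_apply]
    rw [← Equiv.sum_comp finProdFinEquiv
      (fun p => ((starRingEnd ℂ) (U (finProdFinEquiv.symm p).1 (finProdFinEquiv.symm p).2) •
        atomMat (M := M) (EuclideanSpace.single (finProdFinEquiv.symm p).1 1)
          (θ (finProdFinEquiv.symm p).2)) i n)]
    simp only [Equiv.symm_apply_apply]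
    rw [Fintype.sum_prod_type]
    simp only [Matrix.smul_apply, atomMat, Matrix.of_apply, smul_eq_mul,
      EuclideanSpace.single_apply]
    rw [Finset.sum_eq_single i]
    · have : ∀ k : Fin (4*M+1),
          (starRingEnd ℂ) (U i k) * ((if i = i then (1:ℂ) else 0) * star (aVec M (θ k) n))
          = (starRingEnd ℂ) (U i k * A k n) := by
        intro k
        rw [if_pos rfl, one_mul, _root_.map_mul]
        congr 1
      rw [Finset.sum_congr rfl fun k _ => this k, ← map_sum, hUsol]
      simp
    · intro j _ hji
      simp [Ne.symm hji]
    · intro hi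
      exact absurd (Finset.mem_univ i) hi

/-- Dual-certificate optimality: if there is a vector-valued trigonometric polynomial `q`
with `q(τ_j) = sign(c_j) h_j` and `‖q(τ)‖₂ < 1` off the support, then
`⟨λ, y⟩_ℝ = Σ_j |c_j| = ‖X_o‖_A` and `X_o` is optimal for atomic norm minimization. -/
theorem dual_certificate_optimality {K M J : ℕ}
    (c : Fin J → ℂ) (h : Fin J → EuclideanSpace ℂ (Fin K)) (τ : Fin J → ℝ)
    (hc : ∀ j, c j ≠ 0) (hh : ∀ j, ‖h j‖ = 1)
    (hτ : ∀ j, τ j ∈ Set.Ico (0 : ℝ) 1) (hdist : Function.Injective τ)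
    (Xo : Matrix (Fin K) (Fin (4 * M + 1)) ℂ)
    (hXo : Xo = ∑ j, c j • atomMat (h j) (τ j))
    (lam : Fin (4 * M + 1) → ℂ) (b : Fin (4 * M + 1) → EuclideanSpace ℂ (Fin K))
    (q : ℝ → EuclideanSpace ℂ (Fin K))
    (hqdef : ∀ t : ℝ, q t = ∑ n : Fin (4 * M + 1),
      (lam n * Complex.exp (Complex.I * (2 * π * ((n : ℤ) - 2 * M) * t))) • b n)
    (hq1 : ∀ j, q (τ j) = (c j / (‖c j‖ : ℂ)) • h j)
    (hq2 : ∀ t ∈ Set.Ico (0 : ℝ) 1, (∀ j, t ≠ τ j) → ‖q t‖ < 1)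
    (y : Fin (4 * M + 1) → ℂ)
    (hy : ∀ n, y n = ∑ i, star (b n i) * Xo i n) :
    (∑ n, (starRingEnd ℂ) (lam n) * y n).re = ∑ j, ‖c j‖ ∧
    atomicNorm Xo = ∑ j, ‖c j‖ ∧
    ∀ X : Matrix (Fin K) (Fin (4 * M + 1)) ℂ,
      (∀ n, (∑ i, star (b n i) * X i n) = y n) → atomicNorm Xo ≤ atomicNorm X := by
  have inner_as_sum : ∀ (x z : EuclideanSpace ℂ (Fin K)),
      (∑ i, (starRingEnd ℂ) (x i) * z i) = (inner ℂ x z : ℂ) := by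
    intro x z
    simp [PiLp.inner_apply, RCLike.inner_apply, mul_comm]
  have qbound : ∀ t ∈ Set.Ico (0:ℝ) 1, ‖q t‖ ≤ 1 := by
    intro t ht
    by_cases hex : ∃ j, t = τ j
    · obtain ⟨j, rfl⟩ := hex
      rw [hq1 j, norm_smul, hh j, mul_one]
      have hcj : ‖c j‖ ≠ 0 := norm_ne_zero_iff.mpr (hc j)
      rw [norm_div]
      simp [hcj, div_self]
    · exact (hq2 t ht fun j hj => hex ⟨j, hj⟩).le
  have bound : ∀ (J' : ℕ) (c' : Fin J' → ℂ) (h' : Fin J' → EuclideanSpace ℂ (Fin K))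
      (τ' : Fin J' → ℝ) (X : Matrix (Fin K) (Fin (4*M+1)) ℂ),
      (∀ k, ‖h' k‖ = 1) → (∀ k, τ' k ∈ Set.Ico (0:ℝ) 1) →
      X = ∑ k, c' k • atomMat (h' k) (τ' k) →
      (∑ n, (starRingEnd ℂ) (lam n) * (∑ i, star (b n i) * X i n)).re
        ≤ ∑ k, ‖c' k‖ := by
    intro J' c' h' τ' X hh' hτ' hX
    rw [key_identity lam b q hqdef c' h' τ' X hX, Complex.re_sum]
    apply Finset.sum_le_sum
    intro k _
    calc (c' k * ∑ i, (starRingEnd ℂ) (q (τ' k) i) * h' k i).re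
        ≤ ‖c' k * ∑ i, (starRingEnd ℂ) (q (τ' k) i) * h' k i‖ :=
          Complex.re_le_norm _
      _ = ‖c' k‖ * ‖∑ i, (starRingEnd ℂ) (q (τ' k) i) * h' k i‖ :=
          norm_mul _ _
      _ ≤ ‖c' k‖ * 1 := by
          refine mul_le_mul_of_nonneg_left ?_ (norm_nonneg _)
          rw [inner_as_sum]
          calc ‖(inner ℂ (q (τ' k)) (h' k) : ℂ)‖ ≤ ‖q (τ' k)‖ * ‖h' k‖ :=
                norm_inner_le_norm _ _
            _ ≤ 1 := by rw [hh' k, mul_one]; exact qbound _ (hτ' k)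
      _ = ‖c' k‖ := mul_one _
  have keyval : (∑ n, (starRingEnd ℂ) (lam n) * y n)
      = ((∑ j, ‖c j‖ : ℝ) : ℂ) := by
    have h0 : (∑ n, (starRingEnd ℂ) (lam n) * y n)
        = ∑ j, c j * ∑ i, (starRingEnd ℂ) (q (τ j) i) * h j i := by
      simp only [hy]
      exact key_identity lam b q hqdef c h τ Xo hXo
    rw [h0]
    push_cast
    apply Finset.sum_congr rfl
    intro j _
    have hsum : (∑ i, (starRingEnd ℂ) (q (τ j) i) * h j i)
        = (starRingEnd ℂ) (c j / (‖c j‖:ℂ)) * ((‖h j‖:ℝ):ℂ)^2 := by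
      rw [inner_as_sum, hq1 j, inner_smul_left]
      congr 1
      exact_mod_cast inner_self_eq_norm_sq_to_K (h j)
    rw [hsum, hh j]
    have hca : (‖c j‖ : ℂ) ≠ 0 := by
      exact_mod_cast norm_ne_zero_iff.mpr (hc j)
    rw [map_div₀, Complex.conj_ofReal]
    simp only [Complex.ofReal_one, one_pow, mul_one]
    rw [mul_div_assoc', Complex.mul_conj, Complex.normSq_eq_norm_sq]
    push_cast
    rw [sq]
    field_simp
  have part1 : (∑ n, (starRingEnd ℂ) (lam n) * y n).re = ∑ j, ‖c j‖ := by
    rw [keyval, Complex.ofReal_re]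
  have memXo : (∑ j, ‖c j‖) ∈ {t : ℝ | ∃ (J' : ℕ) (c' : Fin J' → ℂ)
      (h' : Fin J' → EuclideanSpace ℂ (Fin K)) (τ' : Fin J' → ℝ),
      (∀ k, ‖h' k‖ = 1) ∧ (∀ k, τ' k ∈ Set.Ico (0 : ℝ) 1) ∧
      Xo = ∑ k, c' k • atomMat (h' k) (τ' k) ∧ t = ∑ k, ‖c' k‖} :=
    ⟨J, c, h, τ, hh, hτ, hXo, rfl⟩
  have part2 : atomicNorm Xo = ∑ j, ‖c j‖ := by
    apply le_antisymm
    · apply csInf_le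
      · refine ⟨0, ?_⟩
        rintro t ⟨J', c', h', τ', _, _, _, rfl⟩
        positivity
      · exact memXo
    · apply le_csInf ⟨_, memXo⟩
      rintro t ⟨J', c', h', τ', hh', hτ', hX', rfl⟩
      calc ∑ j, ‖c j‖ = (∑ n, (starRingEnd ℂ) (lam n) * y n).re := part1.symm
        _ = (∑ n, (starRingEnd ℂ) (lam n) * (∑ i, star (b n i) * Xo i n)).re := by
            simp only [hy]
        _ ≤ ∑ k, ‖c' k‖ := bound J' c' h' τ' Xo hh' hτ' hX'
  refine ⟨part1, part2, ?_⟩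
  intro X hconstraint
  rw [part2]
  obtain ⟨J0, c0, h0, τ0, hh0, hτ0, hX0⟩ := exists_decomposition X
  have memX : (∑ k, ‖c0 k‖) ∈ {t : ℝ | ∃ (J' : ℕ) (c' : Fin J' → ℂ)
      (h' : Fin J' → EuclideanSpace ℂ (Fin K)) (τ' : Fin J' → ℝ),
      (∀ k, ‖h' k‖ = 1) ∧ (∀ k, τ' k ∈ Set.Ico (0 : ℝ) 1) ∧
      X = ∑ k, c' k • atomMat (h' k) (τ' k) ∧ t = ∑ k, ‖c' k‖} :=
    ⟨J0, c0, h0, τ0, hh0, hτ0, hX0, rfl⟩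
  apply le_csInf ⟨_, memX⟩
  rintro t ⟨J', c', h', τ', hh', hτ', hX', rfl⟩
  calc ∑ j, ‖c j‖ = (∑ n, (starRingEnd ℂ) (lam n) * y n).re := part1.symm
    _ = (∑ n, (starRingEnd ℂ) (lam n) * (∑ i, star (b n i) * X i n)).re := by
        simp only [fun n => (hconstraint n).symm]
    _ ≤ ∑ k, ‖c' k‖ := bound J' c' h' τ' X hh' hτ' hX'

end
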